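/- For every t ∈ [0,1] one has 0 ≤ P_c(t) ≤ P_b, where P_b = P_c(1); moreover P_c(0) = 0. (This is property 3 of the paper's Lemma 3: the STP of a cached file never exceeds the STP of a backhaul file.) -/

import Mathlib

open MeasureTheory Finset

/-- `L_0(t) = 2t·∫_1^∞ τu/(u^β+τ) du + 2(1−t)·∫_0^∞ τu/(u^β+τ) du`. -/
noncomputable def L0 (β τ t : ℝ) : ℝ :=
  2 * t * (∫ u in Set.Ioi (1 : ℝ), τ * u / (u ^ β + τ)) +
    2 * (1 - t) * (∫ u in Set.Ioi (0 : ℝ), τ * u / (u ^ β + τ))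

/-- `L_i(t) = 2t·∫_1^∞ τ^i u^{β+1}/(u^β+τ)^{i+1} du + 2(1−t)·∫_0^∞ τ^i u^{β+1}/(u^β+τ)^{i+1} du`
for integers `i ≥ 1`. -/
noncomputable def Li (β τ : ℝ) (i : ℕ) (t : ℝ) : ℝ :=
  2 * t * (∫ u in Set.Ioi (1 : ℝ), τ ^ i * u ^ (β + 1) / (u ^ β + τ) ^ (i + 1)) +
    2 * (1 - t) * (∫ u in Set.Ioi (0 : ℝ), τ ^ i * u ^ (β + 1) / (u ^ β + τ) ^ (i + 1))

/-- The strictly lower-triangular Toeplitz matrix `D(t)` with `(D(t))_{jk} = L_{j−k}(t)` for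
`j > k` and `0` otherwise. -/
noncomputable def Dmat (β τ : ℝ) (N : ℕ) (t : ℝ) : Matrix (Fin N) (Fin N) ℝ :=
  fun j k => if (k : ℕ) < (j : ℕ) then Li β τ ((j : ℕ) - (k : ℕ)) t else 0

/-- The induced `ℓ1` matrix norm `‖M‖₁ = max_{1≤j≤N} ∑_{i=1}^N |M_{ij}|`. -/
noncomputable def matNorm1 {N : ℕ} (M : Matrix (Fin N) (Fin N) ℝ) : ℝ :=
  ⨆ j : Fin N, ∑ i : Fin N, |M i j|

/-- The successful transmission probability of a cached file stored with caching probability `t`: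
`P_c(t) = (t/(t+L_0(t)))·‖(I − (1/(t+L_0(t)))·D(t))^{−1}‖₁`. -/
noncomputable def Pc (β τ : ℝ) (N : ℕ) (t : ℝ) : ℝ :=
  (t / (t + L0 β τ t)) *
    matNorm1 ((1 - (1 / (t + L0 β τ t)) • Dmat β τ N t)⁻¹)


open Set

noncomputable def efun (y : ℕ → ℝ) : ℕ → ℝ
  | 0 => 1
  | (n+1) => ∑ j ∈ (Finset.range (n+1)).attach, y (n+1 - j.1) * efun y j.1
  decreasing_by exact Finset.mem_range.mp j.2

lemma efun_succ (y : ℕ → ℝ) (n : ℕ) :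
    efun y (n+1) = ∑ j ∈ Finset.range (n+1), y (n+1 - j) * efun y j := by
  rw [efun]
  exact Finset.sum_attach (Finset.range (n+1)) (fun j => y (n+1 - j) * efun y j)

lemma efun_nonneg (y : ℕ → ℝ) (hy : ∀ i, 0 ≤ y i) (n : ℕ) : 0 ≤ efun y n := by
  induction n using Nat.strong_induction_on with
  | _ n ih =>
    match n with
    | 0 => rw [efun]; norm_num
    | (m+1) =>
      rw [efun_succ]
      exact Finset.sum_nonneg fun j hj =>
        mul_nonneg (hy _) (ih j (Finset.mem_range.mp hj))

noncomputable def Efun (y : ℕ → ℝ) (n : ℕ) : ℝ := ∑ m ∈ Finset.range (n+1), efun y m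

noncomputable def Pfun (x : ℝ) (y : ℕ → ℝ) : ℕ → ℝ
  | n => x + ∑ j ∈ (Finset.range n).attach, y (n - j.1) * Pfun x y j.1
  decreasing_by exact Finset.mem_range.mp j.2

lemma Pfun_eq (x : ℝ) (y : ℕ → ℝ) (n : ℕ) :
    Pfun x y n = x + ∑ j ∈ Finset.range n, y (n - j) * Pfun x y j := by
  rw [Pfun]
  congr 1
  exact Finset.sum_attach (Finset.range n) (fun j => y (n - j) * Pfun x y j)

lemma Pfun_nonneg (x : ℝ) (y : ℕ → ℝ) (hx : 0 ≤ x) (hy : ∀ i, 0 ≤ y i) (n : ℕ) :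
    0 ≤ Pfun x y n := by
  induction n using Nat.strong_induction_on with
  | _ n ih =>
    rw [Pfun_eq]
    exact add_nonneg hx (Finset.sum_nonneg fun j hj =>
      mul_nonneg (hy _) (ih j (Finset.mem_range.mp hj)))

/-- triangular sum reindexing -/
lemma tri_sum (f : ℕ → ℕ → ℝ) :
    ∀ n, ∑ m ∈ Finset.range n, ∑ j ∈ Finset.range (m+1), f j (m - j)
      = ∑ j ∈ Finset.range n, ∑ i ∈ Finset.range (n - j), f j i := by
  intro n
  induction n with
  | zero => simp
  | succ n ih =>
    rw [Finset.sum_range_succ, ih, Finset.sum_range_succ]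
    have h1 : ∀ j ∈ Finset.range n, ∑ i ∈ Finset.range (n+1-j), f j i
        = ∑ i ∈ Finset.range (n-j), f j i + f j (n-j) := by
      intro j hj
      have hj' := Finset.mem_range.mp hj
      have : n + 1 - j = (n - j) + 1 := by omega
      rw [this, Finset.sum_range_succ]
    have key : ∑ j ∈ Finset.range (n+1), ∑ i ∈ Finset.range (n+1-j), f j i
        = (∑ j ∈ Finset.range n, ∑ i ∈ Finset.range (n-j), f j i)
          + ∑ j ∈ Finset.range (n+1), f j (n-j) := by
      rw [Finset.sum_range_succ (fun j => ∑ i ∈ Finset.range (n+1-j), f j i) n]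
      rw [Finset.sum_congr rfl h1, Finset.sum_add_distrib]
      have h2 : n+1-n = 1 := by omega
      rw [h2, Finset.sum_range_one, Finset.sum_range_succ (fun j => f j (n-j)) n]
      rw [Nat.sub_self]
      ring
    rw [key, Finset.sum_range_succ (fun j => f j (n-j)) n]

lemma Pfun_eq_mul_Efun (x : ℝ) (y : ℕ → ℝ) (n : ℕ) :
    Pfun x y n = x * Efun y n := by
  induction n using Nat.strong_induction_on with
  | _ n ih =>
    rw [Pfun_eq]
    have hsum : ∑ j ∈ Finset.range n, y (n - j) * Pfun x y j
        = x * ∑ j ∈ Finset.range n, y (n - j) * Efun y j := by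
      rw [Finset.mul_sum]
      refine Finset.sum_congr rfl fun j hj => ?_
      rw [ih j (Finset.mem_range.mp hj)]; ring
    rw [hsum]
    -- Efun y n = 1 + ∑_{m<n} efun y (m+1)
    have hE : Efun y n
        = 1 + ∑ m ∈ Finset.range n, ∑ j ∈ Finset.range (m+1), y (m+1-j) * efun y j := by
      simp only [Efun]
      rw [Finset.sum_range_succ']
      have : ∀ m ∈ Finset.range n, efun y (m+1) = ∑ j ∈ Finset.range (m+1), y (m+1-j) * efun y j :=
        fun m _ => efun_succ y m
      rw [Finset.sum_congr rfl this, efun]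
      ring
    rw [hE]
    -- use tri_sum with f j i = y (i+1) * efun y j
    have ht := tri_sum (fun j i => y (i+1) * efun y j) n
    have hl : ∀ m ∈ Finset.range n, ∑ j ∈ Finset.range (m+1), y (m+1-j) * efun y j
        = ∑ j ∈ Finset.range (m+1), (fun j i => y (i+1) * efun y j) j (m - j) := by
      intro m hm
      refine Finset.sum_congr rfl fun j hj => ?_
      have hj' : j ≤ m := Nat.lt_succ_iff.mp (Finset.mem_range.mp hj)
      have : m + 1 - j = (m - j) + 1 := by omega
      rw [this]
    rw [Finset.sum_congr rfl hl, ht]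
    have hL : ∑ j ∈ Finset.range n, y (n-j) * Efun y j
        = ∑ j ∈ Finset.range n, ∑ i ∈ Finset.range (n-j), y (i+1) * efun y j := by
      have h1 : ∀ j ∈ Finset.range n, y (n-j) * Efun y j
          = ∑ k ∈ Finset.range (j+1), (fun k i => y (n-k-i) * efun y k) k (j-k) := by
        intro j hj
        have hj' := Finset.mem_range.mp hj
        rw [Efun, Finset.mul_sum]
        refine Finset.sum_congr rfl fun k hk => ?_
        have hk' := Nat.lt_succ_iff.mp (Finset.mem_range.mp hk)
        simp only []
        have : n - k - (j - k) = n - j := by omega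
        rw [this]
      rw [Finset.sum_congr rfl h1, tri_sum (fun k i => y (n-k-i) * efun y k) n]
      refine Finset.sum_congr rfl fun k hk => ?_
      have hk' := Finset.mem_range.mp hk
      rw [← Finset.sum_range_reflect (fun i => y (i+1) * efun y k) (n-k)]
      refine Finset.sum_congr rfl fun i hi => ?_
      have hi' := Finset.mem_range.mp hi
      congr 2
      omega
    rw [hL]
    ring

lemma Pfun_le_one (w : ℝ) (z : ℕ → ℝ) (hw : 0 ≤ w) (hz : ∀ i, 0 ≤ z i)
    (hsub : ∀ m, w + ∑ i ∈ Finset.range m, z (i+1) ≤ 1) (n : ℕ) :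
    Pfun w z n ≤ 1 := by
  induction n using Nat.strong_induction_on with
  | _ n ih =>
    rw [Pfun_eq]
    have h1 : ∑ j ∈ Finset.range n, z (n - j) * Pfun w z j
        ≤ ∑ j ∈ Finset.range n, z (n - j) := by
      refine Finset.sum_le_sum fun j hj => ?_
      have := ih j (Finset.mem_range.mp hj)
      nlinarith [hz (n - j), Pfun_nonneg w z hw hz j]
    have h2 : ∑ j ∈ Finset.range n, z (n - j) = ∑ i ∈ Finset.range n, z (i+1) := by
      rw [← Finset.sum_range_reflect (fun i => z (i+1)) n]
      refine Finset.sum_congr rfl fun i hi => ?_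
      have := Finset.mem_range.mp hi
      congr 1
      omega
    calc w + ∑ j ∈ Finset.range n, z (n - j) * Pfun w z j
        ≤ w + ∑ i ∈ Finset.range n, z (i+1) := by rw [← h2] at *; linarith
      _ ≤ 1 := hsub n

lemma Pfun_mono (w : ℝ) (z : ℕ → ℝ) (hw : 0 ≤ w) (hz : ∀ i, 0 ≤ z i) (n : ℕ) :
    Pfun w z n ≤ Pfun w z (n+1) := by
  induction n using Nat.strong_induction_on with
  | _ n ih =>
    rw [Pfun_eq w z n, Pfun_eq w z (n+1), Finset.sum_range_succ']
    have hterm : ∀ j ∈ Finset.range n, z (n - j) * Pfun w z j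
        ≤ z (n + 1 - (j+1)) * Pfun w z (j+1) := by
      intro j hj
      have hj' := Finset.mem_range.mp hj
      have he : n + 1 - (j+1) = n - j := by omega
      rw [he]
      have := ih j hj'
      nlinarith [hz (n - j)]
    have := Finset.sum_le_sum hterm
    have h0 : 0 ≤ z (n+1) * Pfun w z 0 :=
      mul_nonneg (hz _) (Pfun_nonneg w z hw hz 0)
    simp only [Nat.sub_zero] at *
    linarith

/-- Abel-type comparison: if prefix sums of `u` are dominated by those of `w`,
and `v` is nonincreasing and nonnegative, then `∑ u v ≤ ∑ w v`. -/
lemma abel_compare (u w v : ℕ → ℝ) (n : ℕ)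
    (hpre : ∀ m, m < n → ∑ i ∈ Finset.range (m+1), u i ≤ ∑ i ∈ Finset.range (m+1), w i)
    (hv : ∀ i, i + 1 < n → v (i+1) ≤ v i) (hv0 : ∀ i, i < n → 0 ≤ v i) :
    ∑ i ∈ Finset.range n, u i * v i ≤ ∑ i ∈ Finset.range n, w i * v i := by
  rcases Nat.eq_zero_or_pos n with h | h
  · simp [h]
  have hc : ∀ (f : ℕ → ℝ), ∑ i ∈ Finset.range n, f i * v i = ∑ i ∈ Finset.range n, v i * f i := by
    intro f; exact Finset.sum_congr rfl fun i _ => mul_comm _ _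
  rw [hc u, hc w]
  simp only [← smul_eq_mul]
  rw [Finset.sum_range_by_parts v u n, Finset.sum_range_by_parts v w n]
  simp only [smul_eq_mul]
  have hU : ∑ i ∈ Finset.range n, u i ≤ ∑ i ∈ Finset.range n, w i := by
    have := hpre (n-1) (by omega)
    have he : n - 1 + 1 = n := by omega
    rwa [he] at this
  have t1 : v (n-1) * ∑ i ∈ Finset.range n, u i ≤ v (n-1) * ∑ i ∈ Finset.range n, w i :=
    mul_le_mul_of_nonneg_left hU (hv0 (n-1) (by omega))
  have t2 : ∑ i ∈ Finset.range (n-1), (v (i+1) - v i) * ∑ j ∈ Finset.range (i+1), w j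
      ≤ ∑ i ∈ Finset.range (n-1), (v (i+1) - v i) * ∑ j ∈ Finset.range (i+1), u j := by
    refine Finset.sum_le_sum fun i hi => ?_
    have hi' := Finset.mem_range.mp hi
    have hneg : v (i+1) - v i ≤ 0 := by
      have := hv i (by omega); linarith
    have := hpre i (by omega)
    nlinarith
  linarith

/-- The key comparison lemma: stochastic domination implies the stopping probability
with the dominated step distribution is smaller. -/
lemma Pfun_le_Pfun (x w : ℝ) (y z : ℕ → ℝ) (hx : 0 ≤ x) (hy : ∀ i, 0 ≤ y i)
    (hz : ∀ i, 0 ≤ z i)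
    (hdom : ∀ m, x + ∑ i ∈ Finset.range m, y (i+1) ≤ w + ∑ i ∈ Finset.range m, z (i+1))
    (hsub : ∀ m, w + ∑ i ∈ Finset.range m, z (i+1) ≤ 1) (n : ℕ) :
    Pfun x y n ≤ Pfun w z n := by
  have hw : 0 ≤ w := by have := hdom 0; simp at this; linarith
  induction n using Nat.strong_induction_on with
  | _ n ih =>
    -- step 1: replace Pfun x y j by Pfun w z j in the recursion
    rw [Pfun_eq x y n, Pfun_eq w z n]
    have step1 : ∑ j ∈ Finset.range n, y (n - j) * Pfun x y j
        ≤ ∑ j ∈ Finset.range n, y (n - j) * Pfun w z j := by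
      refine Finset.sum_le_sum fun j hj => ?_
      exact mul_le_mul_of_nonneg_left (ih j (Finset.mem_range.mp hj)) (hy _)
    -- step 2: reindex to i = n - j and apply Abel comparison with an extra leading term
    -- define u i, v i on range (n+1): u 0 = x, u (i+1) = y (i+1); v 0 = 1, v (i+1) = Pfun w z (n-(i+1))
    set v : ℕ → ℝ := fun i => if i = 0 then 1 else Pfun w z (n - i) with hv
    set u : ℕ → ℝ := fun i => if i = 0 then x else y i with hu
    set uu : ℕ → ℝ := fun i => if i = 0 then w else z i with huu
    have hrefl : ∀ (c : ℕ → ℝ), ∑ j ∈ Finset.range n, c (n - j) * Pfun w z j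
        = ∑ i ∈ Finset.range n, c (i+1) * Pfun w z (n - (i+1)) := by
      intro c
      rw [← Finset.sum_range_reflect (fun i => c (i+1) * Pfun w z (n - (i+1))) n]
      refine Finset.sum_congr rfl fun j hj => ?_
      have hj' := Finset.mem_range.mp hj
      have e1 : n - 1 - j + 1 = n - j := by omega
      have e2 : n - (n - j) = j := by omega
      rw [e1, e2]
    have habel : ∑ i ∈ Finset.range (n+1), u i * v i ≤ ∑ i ∈ Finset.range (n+1), uu i * v i := by
      refine abel_compare u uu v (n+1) ?_ ?_ ?_
      · intro m _
        have hx' : ∀ (a : ℝ) (c : ℕ → ℝ), ∑ i ∈ Finset.range (m+1),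
            (fun i => if i = 0 then a else c i) i = a + ∑ i ∈ Finset.range m, c (i+1) := by
          intro a c
          rw [Finset.sum_range_succ']
          simp
          ring
        rw [hx' x y, hx' w z]
        exact hdom m
      · intro i hi
        rcases Nat.eq_zero_or_pos i with h0 | h0
        · subst h0
          simp only [hv]
          norm_num
          exact Pfun_le_one w z hw hz hsub (n-1)
        · have h1 : i ≠ 0 := by omega
          have h2 : i + 1 ≠ 0 := by omega
          simp only [hv, if_neg h1, if_neg h2]
          have he : n - i = (n - (i+1)) + 1 := by omega
          rw [he]
          exact Pfun_mono w z hw hz (n - (i+1))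
      · intro i _
        rcases Nat.eq_zero_or_pos i with h0 | h0
        · subst h0; simp [hv]
        · have h1 : i ≠ 0 := by omega
          simp only [hv, if_neg h1]
          exact Pfun_nonneg w z hw hz _
    have hexp : ∀ (a : ℝ) (c : ℕ → ℝ), ∑ i ∈ Finset.range (n+1),
        (fun i => if i = 0 then a else c i) i * v i
        = a + ∑ i ∈ Finset.range n, c (i+1) * Pfun w z (n - (i+1)) := by
      intro a c
      rw [Finset.sum_range_succ']
      simp only [hv]
      have : ∀ i ∈ Finset.range n, (if i + 1 = 0 then a else c (i+1)) * (if i + 1 = 0 then 1 else Pfun w z (n - (i+1)))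
          = c (i+1) * Pfun w z (n - (i+1)) := by
        intro i _
        simp
      rw [Finset.sum_congr rfl this]
      simp
      ring
    rw [hexp x y, hexp w z] at habel
    rw [← hrefl y, ← hrefl z] at habel
    linarith

lemma efun_zero (y : ℕ → ℝ) : efun y 0 = 1 := by rw [efun]

lemma Efun_mono (y : ℕ → ℝ) (hy : ∀ i, 0 ≤ y i) {m n : ℕ} (h : m ≤ n) :
    Efun y m ≤ Efun y n := by
  apply Finset.sum_le_sum_of_subset_of_nonneg
  · exact Finset.range_subset_range.mpr (by omega)
  · exact fun i _ _ => efun_nonneg y hy i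


noncomputable def Tmat (N : ℕ) (y : ℕ → ℝ) : Matrix (Fin N) (Fin N) ℝ :=
  fun j k => if (k : ℕ) ≤ (j : ℕ) then efun y ((j : ℕ) - (k : ℕ)) else 0

lemma Tmat_right_inv (N : ℕ) (c : ℝ) (L : ℕ → ℝ)
    (M : Matrix (Fin N) (Fin N) ℝ)
    (hM : ∀ j k, M j k = if (k : ℕ) < (j : ℕ) then L ((j : ℕ) - (k : ℕ)) else 0) :
    (1 - c • M) * Tmat N (fun i => c * L i) = 1 := by
  set y : ℕ → ℝ := fun i => c * L i with hy
  ext j k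
  rw [Matrix.mul_apply]
  have hsummand : ∀ m : Fin N, (1 - c • M) j m * Tmat N y m k
      = (if j = m then 1 else 0) * Tmat N y m k - c * (M j m * Tmat N y m k) := by
    intro m
    simp only [Matrix.sub_apply, Matrix.smul_apply, Matrix.one_apply, smul_eq_mul]
    ring
  rw [Finset.sum_congr rfl (fun m _ => hsummand m), Finset.sum_sub_distrib]
  simp only [ite_mul, one_mul, zero_mul]
  rw [Finset.sum_ite_eq (Finset.univ : Finset (Fin N)) j (fun m => Tmat N y m k)]
  simp only [Finset.mem_univ, if_true]
  rw [← Finset.mul_sum]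
  -- compute Z := ∑ m, M j m * T m k
  have hZ : ∑ m : Fin N, M j m * Tmat N y m k
      = ∑ i ∈ Finset.range ((j : ℕ) - (k : ℕ)), L ((j:ℕ) - (k:ℕ) - i) * efun y i := by
    have h1 : ∀ m : Fin N, M j m * Tmat N y m k
        = (fun m : ℕ => if (k:ℕ) ≤ m ∧ m < (j:ℕ) then L ((j:ℕ)-m) * efun y (m-(k:ℕ)) else 0) (m : ℕ) := by
      intro m
      rw [hM, Tmat]
      by_cases h1 : (m:ℕ) < (j:ℕ) <;> by_cases h2 : (k:ℕ) ≤ (m:ℕ) <;>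
        simp [h1, h2]
    rw [Finset.sum_congr rfl (fun m _ => h1 m),
      Fin.sum_univ_eq_sum_range (fun m : ℕ => if (k:ℕ) ≤ m ∧ m < (j:ℕ) then L ((j:ℕ)-m) * efun y (m-(k:ℕ)) else 0) N]
    have h2 : ∀ m ∈ Finset.range N,
        (if (k:ℕ) ≤ m ∧ m < (j:ℕ) then L ((j:ℕ)-m) * efun y (m-(k:ℕ)) else 0)
        = if m ∈ Finset.Ico (k:ℕ) (j:ℕ) then L ((j:ℕ)-m) * efun y (m-(k:ℕ)) else 0 := by
      intro m _
      simp [Finset.mem_Ico]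
    rw [Finset.sum_congr rfl h2, Finset.sum_ite_mem]
    have h3 : Finset.range N ∩ Finset.Ico (k:ℕ) (j:ℕ) = Finset.Ico (k:ℕ) (j:ℕ) := by
      apply Finset.inter_eq_right.mpr
      intro m hm
      simp only [Finset.mem_Ico] at hm
      exact Finset.mem_range.mpr (lt_trans hm.2 j.isLt)
    rw [h3, Finset.sum_Ico_eq_sum_range]
    refine Finset.sum_congr rfl fun i hi => ?_
    have hi' := Finset.mem_range.mp hi
    have e1 : (j:ℕ) - ((k:ℕ) + i) = (j:ℕ) - (k:ℕ) - i := by omega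
    have e2 : (k:ℕ) + i - (k:ℕ) = i := by omega
    rw [e1, e2]
  rw [hZ]
  rcases lt_trichotomy ((k:ℕ)) ((j:ℕ)) with h | h | h
  · -- k < j : recursion cancels
    have hne : j ≠ k := by intro he; rw [he] at h; omega
    obtain ⟨d, hd⟩ : ∃ d, (j:ℕ) - (k:ℕ) = d + 1 := ⟨(j:ℕ)-(k:ℕ)-1, by omega⟩
    rw [Matrix.one_apply_ne hne, Tmat]
    simp only [le_of_lt h, if_true]
    rw [hd, efun_succ]
    rw [Finset.mul_sum]
    rw [← Finset.sum_sub_distrib]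
    apply Finset.sum_eq_zero
    intro i hi
    simp only [hy]
    ring
  · -- j = k
    have he : j = k := Fin.val_injective h.symm
    rw [he]
    simp [Tmat, Matrix.one_apply, efun_zero, h, Nat.sub_self]
  · -- j < k
    have hne : j ≠ k := by intro he; rw [he] at h; omega
    have hIco : Finset.Ico (k:ℕ) (j:ℕ) = ∅ := Finset.Ico_eq_empty (by omega)
    have hr : (j:ℕ) - (k:ℕ) = 0 := by omega
    rw [Matrix.one_apply_ne hne, Tmat]
    simp only [hr]
    rw [if_neg (by omega), Finset.sum_range_zero]
    ring

lemma Tmat_col_sum (N : ℕ) (y : ℕ → ℝ) (hy : ∀ i, 0 ≤ y i) (k : Fin N) :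
    ∑ i : Fin N, |Tmat N y i k| = Efun y (N - 1 - (k : ℕ)) := by
  have h1 : ∀ i : Fin N, |Tmat N y i k|
      = (fun m : ℕ => if (k:ℕ) ≤ m then efun y (m - (k:ℕ)) else 0) (i : ℕ) := by
    intro i
    rw [Tmat]
    by_cases h : (k:ℕ) ≤ (i:ℕ) <;> simp [h, abs_of_nonneg (efun_nonneg y hy _)]
  rw [Finset.sum_congr rfl (fun i _ => h1 i),
    Fin.sum_univ_eq_sum_range (fun m : ℕ => if (k:ℕ) ≤ m then efun y (m - (k:ℕ)) else 0) N]
  have h2 : ∀ m ∈ Finset.range N,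
      (if (k:ℕ) ≤ m then efun y (m - (k:ℕ)) else 0)
      = if m ∈ Finset.Ico (k:ℕ) N then efun y (m - (k:ℕ)) else 0 := by
    intro m hm
    have := Finset.mem_range.mp hm
    simp [Finset.mem_Ico, this]
  rw [Finset.sum_congr rfl h2, Finset.sum_ite_mem]
  have h3 : Finset.range N ∩ Finset.Ico (k:ℕ) N = Finset.Ico (k:ℕ) N := by
    apply Finset.inter_eq_right.mpr
    intro m hm
    simp only [Finset.mem_Ico] at hm
    exact Finset.mem_range.mpr hm.2
  rw [h3, Finset.sum_Ico_eq_sum_range]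
  have h4 : ∀ i ∈ Finset.range (N - (k:ℕ)), efun y ((k:ℕ) + i - (k:ℕ)) = efun y i := by
    intro i _
    congr 1
    omega
  rw [Finset.sum_congr rfl h4, Efun]
  have h5 : N - 1 - (k:ℕ) + 1 = N - (k:ℕ) := by have := k.isLt; omega
  rw [h5]

lemma matNorm1_Tmat (N : ℕ) (hN : 1 ≤ N) (y : ℕ → ℝ) (hy : ∀ i, 0 ≤ y i) :
    matNorm1 (Tmat N y) = Efun y (N - 1) := by
  haveI : Nonempty (Fin N) := ⟨⟨0, hN⟩⟩
  apply le_antisymm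
  · apply ciSup_le
    intro k
    rw [Tmat_col_sum N y hy k]
    exact Efun_mono y hy (by omega)
  · set k0 : Fin N := ⟨0, hN⟩ with hk0def
    have h0 := Tmat_col_sum N y hy k0
    have hk0 : (k0 : ℕ) = 0 := rfl
    rw [hk0, Nat.sub_zero] at h0
    rw [← h0]
    exact le_ciSup (Set.Finite.bddAbove
      (Set.finite_range fun j : Fin N => ∑ i : Fin N, |Tmat N y i j|)) k0

lemma inv_eq_Tmat (N : ℕ) (c : ℝ) (L : ℕ → ℝ) (M : Matrix (Fin N) (Fin N) ℝ)
    (hM : ∀ j k, M j k = if (k : ℕ) < (j : ℕ) then L ((j : ℕ) - (k : ℕ)) else 0) :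
    (1 - c • M)⁻¹ = Tmat N (fun i => c * L i) :=
  Matrix.inv_eq_right_inv (Tmat_right_inv N c L M hM)


section analysis
variable {β τ : ℝ} (hβ : 2 < β) (hτ : 0 < τ)

/-- pointwise positivity of the denominator -/
lemma den_pos (hτ : 0 < τ) (u : ℝ) (hu : 0 < u) : 0 < u ^ β + τ :=
  add_pos (Real.rpow_pos_of_pos hu β) hτ

lemma contH (hτ : 0 < τ) : ContinuousOn (fun u : ℝ => τ * u / (u ^ β + τ)) (Ioi (0:ℝ)) := by
  apply ContinuousOn.div
  · exact (continuous_const.mul continuous_id).continuousOn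
  · exact ContinuousOn.add
      (fun u hu => (Real.continuousAt_rpow_const u β (Or.inl (ne_of_gt hu))).continuousWithinAt)
      continuousOn_const
  · exact fun u hu => ne_of_gt (den_pos hτ u hu)

lemma contG (hτ : 0 < τ) (i : ℕ) :
    ContinuousOn (fun u : ℝ => τ ^ i * u ^ (β + 1) / (u ^ β + τ) ^ (i + 1)) (Ioi (0:ℝ)) := by
  apply ContinuousOn.div
  · exact ContinuousOn.mul continuousOn_const
      (fun u hu => (Real.continuousAt_rpow_const u (β+1) (Or.inl (ne_of_gt hu))).continuousWithinAt)
  · exact ContinuousOn.pow (ContinuousOn.add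
      (fun u hu => (Real.continuousAt_rpow_const u β (Or.inl (ne_of_gt hu))).continuousWithinAt)
      continuousOn_const) _
  · exact fun u hu => ne_of_gt (pow_pos (den_pos hτ u hu) _)

lemma integrable_H (hβ : 2 < β) (hτ : 0 < τ) :
    IntegrableOn (fun u : ℝ => τ * u / (u ^ β + τ)) (Ioi (0:ℝ)) := by
  have hmeas : ∀ s : Set ℝ, s ⊆ Ioi 0 → MeasurableSet s →
      AEStronglyMeasurable (fun u : ℝ => τ * u / (u ^ β + τ)) (volume.restrict s) := by
    intro s hs hsm
    exact ((contH hτ).mono hs).aestronglyMeasurable hsm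
  have h1 : IntegrableOn (fun u : ℝ => τ * u / (u ^ β + τ)) (Ioc (0:ℝ) 1) := by
    apply Integrable.mono' (integrable_const (1:ℝ)) (hmeas _ Ioc_subset_Ioi_self measurableSet_Ioc)
    refine (ae_restrict_iff' measurableSet_Ioc).mpr (ae_of_all _ fun u hu => ?_)
    have hu0 : 0 < u := hu.1
    have hd := den_pos (β:=β) hτ u hu0
    have h2 : τ * u / (u ^ β + τ) ≤ u := by
      rw [div_le_iff₀ hd]
      have : τ ≤ u ^ β + τ := le_add_of_nonneg_left (Real.rpow_pos_of_pos hu0 β).le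
      nlinarith
    have h3 : 0 ≤ τ * u / (u ^ β + τ) := by positivity
    rw [Real.norm_eq_abs, abs_of_nonneg h3]
    exact h2.trans hu.2
  have h2 : IntegrableOn (fun u : ℝ => τ * u / (u ^ β + τ)) (Ioi (1:ℝ)) := by
    have hint : IntegrableOn (fun u : ℝ => τ * u ^ (1 - β)) (Ioi (1:ℝ)) :=
      (integrableOn_Ioi_rpow_of_lt (by linarith) one_pos).const_mul τ
    apply Integrable.mono' hint (hmeas _ (fun u hu => mem_Ioi.mpr (lt_trans one_pos (mem_Ioi.mp hu))) measurableSet_Ioi)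
    refine (ae_restrict_iff' measurableSet_Ioi).mpr (ae_of_all _ fun u hu => ?_)
    have hu1 : (1:ℝ) < u := hu
    have hu0 : 0 < u := lt_trans one_pos hu1
    have hd := den_pos (β:=β) hτ u hu0
    have hb : 0 < u ^ β := Real.rpow_pos_of_pos hu0 β
    have h3 : 0 ≤ τ * u / (u ^ β + τ) := by positivity
    rw [Real.norm_eq_abs, abs_of_nonneg h3]
    rw [div_le_iff₀ hd]
    have key : u ^ (1 - β) * u ^ β = u := by
      rw [← Real.rpow_add hu0, ← Real.rpow_one u]; norm_num
    have : τ * u ^ (1 - β) * (u ^ β + τ) = τ * u + τ^2 * u ^ (1-β) := by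
      have expand : τ * u ^ (1 - β) * (u ^ β + τ) = τ * (u ^ (1-β) * u ^ β) + τ^2 * u ^ (1-β) := by ring
      rw [expand, key]
    rw [this]
    have : 0 ≤ τ^2 * u ^ (1-β) := by positivity
    linarith
  have := h1.union h2
  rwa [Ioc_union_Ioi_eq_Ioi (zero_le_one)] at this

lemma g_le_H (hτ : 0 < τ) (i : ℕ) (u : ℝ) (hu : 0 < u) :
    τ ^ (i+1) * u ^ (β + 1) / (u ^ β + τ) ^ (i + 1 + 1) ≤ τ * u / (u ^ β + τ) := by
  have hb : 0 < u ^ β := Real.rpow_pos_of_pos hu β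
  have hd : 0 < u ^ β + τ := den_pos hτ u hu
  have hexp : u ^ (β + 1) = u ^ β * u := by
    rw [Real.rpow_add hu, Real.rpow_one]
  have key : τ ^ i * u ^ β ≤ (u ^ β + τ) ^ (i + 1) := by
    calc τ ^ i * u ^ β ≤ (u ^ β + τ) ^ i * (u ^ β + τ) := by
          apply mul_le_mul _ (by linarith) hb.le (by positivity)
          exact pow_le_pow_left₀ hτ.le (by linarith) i
      _ = (u ^ β + τ) ^ (i+1) := by ring
  have heq : τ ^ (i+1) * u ^ (β + 1) / (u ^ β + τ) ^ (i + 1 + 1)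
      = (τ * u / (u ^ β + τ)) * ((τ ^ i * u ^ β) / (u ^ β + τ) ^ (i+1)) := by
    rw [hexp]
    field_simp
    ring
  rw [heq]
  have h1 : (τ ^ i * u ^ β) / (u ^ β + τ) ^ (i+1) ≤ 1 := by
    rw [div_le_one (by positivity)]
    exact key
  have h2 : 0 ≤ τ * u / (u ^ β + τ) := by positivity
  nlinarith [mul_nonneg (by positivity : (0:ℝ) ≤ τ^i * u^β) (le_of_lt (inv_pos.mpr (pow_pos hd (i+1))))]

lemma integrable_g (hβ : 2 < β) (hτ : 0 < τ) (i : ℕ) :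
    IntegrableOn (fun u : ℝ => τ ^ (i+1) * u ^ (β + 1) / (u ^ β + τ) ^ (i + 1 + 1)) (Ioi (0:ℝ)) := by
  apply Integrable.mono' (integrable_H hβ hτ)
    (((contG hτ (i+1)).mono (subset_refl _)).aestronglyMeasurable measurableSet_Ioi)
  refine (ae_restrict_iff' measurableSet_Ioi).mpr (ae_of_all _ fun u hu => ?_)
  have hu0 : (0:ℝ) < u := hu
  have h0 : 0 ≤ τ ^ (i+1) * u ^ (β + 1) / (u ^ β + τ) ^ (i + 1 + 1) := by
    have := den_pos (β:=β) hτ u hu0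
    positivity
  rw [Real.norm_eq_abs, abs_of_nonneg h0]
  exact g_le_H hτ i u hu0

lemma geom_id (hτ : 0 < τ) (m : ℕ) (u : ℝ) (hu : 0 < u) :
    ∑ i ∈ Finset.range m, τ^(i+1) * u^(β+1) / (u^β+τ)^(i+1+1)
      = (τ*u/(u^β+τ)) * (1 - (τ/(u^β+τ))^m) := by
  have hd : 0 < u ^ β + τ := den_pos hτ u hu
  have hd' : (u:ℝ) ^ β + τ ≠ 0 := ne_of_gt hd
  have hexp : u ^ (β + 1) = u ^ β * u := by rw [Real.rpow_add hu, Real.rpow_one]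
  induction m with
  | zero => simp
  | succ m ih =>
    rw [Finset.sum_range_succ, ih]
    rw [hexp]
    simp only [div_pow]
    field_simp
    ring

lemma sum_int_g (hβ : 2 < β) (hτ : 0 < τ) (m : ℕ) {s : Set ℝ} (hs : s ⊆ Ioi (0:ℝ))
    (hsm : MeasurableSet s) :
    ∑ i ∈ Finset.range m, ∫ u in s, τ^(i+1) * u^(β+1) / (u^β+τ)^(i+1+1)
      = ∫ u in s, (τ*u/(u^β+τ)) * (1 - (τ/(u^β+τ))^m) := by
  rw [← integral_finset_sum _ (fun i _ => ((integrable_g hβ hτ i).mono_set hs))]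
  exact setIntegral_congr_fun hsm (fun u hu => geom_id hτ m u (hs hu))

lemma integrable_Hphi (hβ : 2 < β) (hτ : 0 < τ) (m : ℕ) :
    IntegrableOn (fun u : ℝ => (τ*u/(u^β+τ)) * (1 - (τ/(u^β+τ))^m)) (Ioi (0:ℝ)) := by
  have h : IntegrableOn (fun u : ℝ => ∑ i ∈ Finset.range m, τ^(i+1) * u^(β+1) / (u^β+τ)^(i+1+1))
      (Ioi (0:ℝ)) := by
    apply MeasureTheory.integrable_finset_sum
    exact fun i _ => integrable_g hβ hτ i
  exact h.congr_fun (fun u hu => geom_id hτ m u hu) measurableSet_Ioi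

lemma split_int (F : ℝ → ℝ) (h : IntegrableOn F (Ioi (0:ℝ))) :
    ∫ u in Ioi (0:ℝ), F u = (∫ u in Ioc (0:ℝ) 1, F u) + ∫ u in Ioi (1:ℝ), F u := by
  rw [← setIntegral_union (Ioc_disjoint_Ioi le_rfl) measurableSet_Ioi
    (h.mono_set Ioc_subset_Ioi_self) (h.mono_set (Ioi_subset_Ioi zero_le_one)),
    Ioc_union_Ioi_eq_Ioi zero_le_one]

/-- main integral comparison: `PB·(1+2A) ≤ B·(1+2·PA)` in expanded form -/
lemma star (hβ : 2 < β) (hτ : 0 < τ) (m : ℕ) :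
    (∫ u in Ioi (0:ℝ), (τ*u/(u^β+τ)) * (1 - (τ/(u^β+τ))^m))
      + 2 * ((∫ u in Ioi (0:ℝ), (τ*u/(u^β+τ)) * (1 - (τ/(u^β+τ))^m))
          * (∫ u in Ioi (1:ℝ), τ*u/(u^β+τ)))
    ≤ (∫ u in Ioi (0:ℝ), τ*u/(u^β+τ))
      + 2 * ((∫ u in Ioi (0:ℝ), τ*u/(u^β+τ))
          * (∫ u in Ioi (1:ℝ), (τ*u/(u^β+τ)) * (1 - (τ/(u^β+τ))^m))) := by
  set φ1 : ℝ := 1 - (τ/(1+τ))^m with hφ1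
  have hHpos : ∀ u : ℝ, 0 < u → 0 ≤ τ*u/(u^β+τ) := by
    intro u hu
    have := den_pos (β:=β) hτ u hu
    positivity
  have hr : ∀ u : ℝ, 0 < u → 0 < τ/(u^β+τ) ∧ τ/(u^β+τ) < 1 := by
    intro u hu
    have hd := den_pos (β:=β) hτ u hu
    have hb : 0 < u ^ β := Real.rpow_pos_of_pos hu β
    constructor
    · positivity
    · rw [div_lt_one hd]; linarith
  have hφm_nonneg : ∀ u : ℝ, 0 < u → 0 ≤ 1 - (τ/(u^β+τ))^m := by
    intro u hu
    have := hr u hu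
    have : (τ/(u^β+τ))^m ≤ 1 := pow_le_one₀ this.1.le this.2.le
    linarith
  have hφm_le_one : ∀ u : ℝ, 0 < u → 1 - (τ/(u^β+τ))^m ≤ 1 := by
    intro u hu
    have := (hr u hu).1
    have : 0 ≤ (τ/(u^β+τ))^m := by positivity
    linarith
  have hφ1_nonneg : 0 ≤ φ1 := by
    have h1 : τ/(1+τ) < 1 := by rw [div_lt_one (by linarith)]; linarith
    have h0 : 0 ≤ τ/(1+τ) := by positivity
    have := pow_le_one₀ (n := m) h0 h1.le
    simp only [hφ1]; linarith
  have hφ1_le_one : φ1 ≤ 1 := by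
    have : 0 ≤ (τ/(1+τ))^m := by positivity
    simp only [hφ1]; linarith
  -- key pointwise comparisons of φm with φ1
  have hφ_small : ∀ u ∈ Ioc (0:ℝ) 1, 1 - (τ/(u^β+τ))^m ≤ φ1 := by
    intro u hu
    have hu0 : 0 < u := hu.1
    have hd := den_pos (β:=β) hτ u hu0
    have h1 : u ^ β ≤ 1 := by
      have := Real.rpow_le_rpow hu0.le hu.2 (by linarith : (0:ℝ) ≤ β)
      rwa [Real.one_rpow] at this
    have h2 : τ/(1+τ) ≤ τ/(u^β+τ) := by
      apply div_le_div_of_nonneg_left hτ.le hd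
      linarith
    have h3 : (τ/(1+τ))^m ≤ (τ/(u^β+τ))^m := pow_le_pow_left₀ (by positivity) h2 m
    simp only [hφ1]; linarith
  have hφ_big : ∀ u ∈ Ioi (1:ℝ), φ1 ≤ 1 - (τ/(u^β+τ))^m := by
    intro u hu
    have hu1 : (1:ℝ) < u := hu
    have hu0 : 0 < u := lt_trans one_pos hu1
    have hd := den_pos (β:=β) hτ u hu0
    have h1 : (1:ℝ) ≤ u ^ β := by
      have := Real.rpow_le_rpow (by norm_num : (0:ℝ) ≤ 1) hu1.le (by linarith : (0:ℝ) ≤ β)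
      rwa [Real.one_rpow] at this
    have h2 : τ/(u^β+τ) ≤ τ/(1+τ) := by
      apply div_le_div_of_nonneg_left hτ.le (by linarith)
      linarith
    have h3 : (τ/(u^β+τ))^m ≤ (τ/(1+τ))^m := by
      apply pow_le_pow_left₀ (by positivity) h2 m
    simp only [hφ1]; linarith
  -- abbreviations
  set C : ℝ := ∫ u in Ioc (0:ℝ) 1, τ*u/(u^β+τ) with hC
  set A : ℝ := ∫ u in Ioi (1:ℝ), τ*u/(u^β+τ) with hA
  set Cm : ℝ := ∫ u in Ioc (0:ℝ) 1, (τ*u/(u^β+τ)) * (1 - (τ/(u^β+τ))^m) with hCm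
  set Am : ℝ := ∫ u in Ioi (1:ℝ), (τ*u/(u^β+τ)) * (1 - (τ/(u^β+τ))^m) with hAm
  have hintH := integrable_H hβ hτ
  have hintHphi := integrable_Hphi hβ hτ m
  have hsplitH : (∫ u in Ioi (0:ℝ), τ*u/(u^β+τ)) = C + A := split_int _ hintH
  have hsplitHphi : (∫ u in Ioi (0:ℝ), (τ*u/(u^β+τ)) * (1 - (τ/(u^β+τ))^m)) = Cm + Am :=
    split_int _ hintHphi
  rw [hsplitH, hsplitHphi]
  -- nonnegativity
  have hC0 : 0 ≤ C := setIntegral_nonneg measurableSet_Ioc fun u hu => hHpos u hu.1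
  have hA0 : 0 ≤ A := setIntegral_nonneg measurableSet_Ioi fun u hu => hHpos u (lt_trans one_pos hu)
  have hAm0 : 0 ≤ Am := setIntegral_nonneg measurableSet_Ioi fun u hu =>
    mul_nonneg (hHpos u (lt_trans one_pos hu)) (hφm_nonneg u (lt_trans one_pos hu))
  -- Cm ≤ φ1 * C
  have hCm_le : Cm ≤ φ1 * C := by
    rw [hCm, hC, ← integral_const_mul]
    apply setIntegral_mono_on (hintHphi.mono_set Ioc_subset_Ioi_self)
      ((hintH.mono_set Ioc_subset_Ioi_self).const_mul φ1) measurableSet_Ioc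
    intro u hu
    rw [mul_comm φ1 _]
    exact mul_le_mul_of_nonneg_left (hφ_small u hu) (hHpos u hu.1)
  -- φ1 * A ≤ Am
  have hA_ge : φ1 * A ≤ Am := by
    rw [hAm, hA, ← integral_const_mul]
    apply setIntegral_mono_on ((hintH.mono_set (Ioi_subset_Ioi zero_le_one)).const_mul φ1)
      (hintHphi.mono_set (Ioi_subset_Ioi zero_le_one)) measurableSet_Ioi
    intro u hu
    rw [mul_comm φ1 _]
    exact mul_le_mul_of_nonneg_left (hφ_big u hu) (hHpos u (lt_trans one_pos hu))
  -- Cm ≤ C and Am ≤ A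
  have hCm_le_C : Cm ≤ C := by
    apply setIntegral_mono_on (hintHphi.mono_set Ioc_subset_Ioi_self)
      (hintH.mono_set Ioc_subset_Ioi_self) measurableSet_Ioc
    intro u hu
    nlinarith [hHpos u hu.1, hφm_le_one u hu.1, hφm_nonneg u hu.1]
  have hAm_le_A : Am ≤ A := by
    apply setIntegral_mono_on (hintHphi.mono_set (Ioi_subset_Ioi zero_le_one))
      (hintH.mono_set (Ioi_subset_Ioi zero_le_one)) measurableSet_Ioi
    intro u hu
    have hu0 := lt_trans one_pos (mem_Ioi.mp hu)
    nlinarith [hHpos u hu0, hφm_le_one u hu0, hφm_nonneg u hu0]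
  -- key: Cm * A ≤ C * Am
  have hkey : Cm * A ≤ C * Am := by
    calc Cm * A ≤ (φ1 * C) * A := mul_le_mul_of_nonneg_right hCm_le hA0
      _ = C * (φ1 * A) := by ring
      _ ≤ C * Am := mul_le_mul_of_nonneg_left hA_ge hC0
  nlinarith [hkey, hCm_le_C, hAm_le_A]


lemma dom_algebra (t A B PA PB : ℝ) (ht0 : 0 ≤ t) (ht1 : t ≤ 1) (hA0 : 0 ≤ A) (hB0 : 0 ≤ B)
    (hPA0 : 0 ≤ PA) (hPB0 : 0 ≤ PB)
    (hstar : PB + 2 * (PB * A) ≤ B + 2 * (B * PA)) :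
    t / (t + (2*t*A + 2*(1-t)*B)) + 1 / (t + (2*t*A + 2*(1-t)*B)) * (2*t*PA + 2*(1-t)*PB)
    ≤ 1 / (1 + (2*1*A + 2*(1-1)*B)) + 1 / (1 + (2*1*A + 2*(1-1)*B)) * (2*1*PA + 2*(1-1)*PB) := by
  have e1 : 1 + (2*1*A + 2*(1-1)*B) = 1 + 2*A := by ring
  rw [e1]
  have hSA : (0:ℝ) < 1 + 2*A := by linarith
  have eR : 1 / (1 + 2*A) + 1 / (1 + 2*A) * (2*1*PA + 2*(1-1)*PB) = (1 + 2*PA)/(1+2*A) := by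
    field_simp
    ring
  rw [eR]
  have hS0 : 0 ≤ t + (2*t*A + 2*(1-t)*B) := by nlinarith
  rcases eq_or_lt_of_le hS0 with hS | hS
  · rw [← hS]
    simp only [div_zero, one_div, zero_mul]
    have : (0:ℝ) ≤ (1 + 2*PA)/(1+2*A) := by positivity
    linarith
  · have eL : t / (t + (2*t*A + 2*(1-t)*B)) + 1 / (t + (2*t*A + 2*(1-t)*B)) * (2*t*PA + 2*(1-t)*PB)
        = (t + (2*t*PA + 2*(1-t)*PB)) / (t + (2*t*A + 2*(1-t)*B)) := by
      field_simp
    rw [eL, div_le_div_iff₀ hS hSA]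
    nlinarith [mul_nonneg (by linarith : (0:ℝ) ≤ 1 - t)
      (by linarith : (0:ℝ) ≤ (B + 2*(B*PA)) - (PB + 2*(PB*A)))]

lemma sub_algebra (A B PA PB : ℝ) (hA0 : 0 ≤ A) (hPB0 : 0 ≤ PB) (hPAA : PA ≤ A) :
    1 / (1 + (2*1*A + 2*(1-1)*B)) + 1 / (1 + (2*1*A + 2*(1-1)*B)) * (2*1*PA + 2*(1-1)*PB) ≤ 1 := by
  have e1 : 1 + (2*1*A + 2*(1-1)*B) = 1 + 2*A := by ring
  rw [e1]
  have hSA : (0:ℝ) < 1 + 2*A := by linarith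
  have eR : 1 / (1 + 2*A) + 1 / (1 + 2*A) * (2*1*PA + 2*(1-1)*PB) = (1 + 2*PA)/(1+2*A) := by
    field_simp
    ring
  rw [eR, div_le_one hSA]
  linarith

lemma L0_eq (β τ s : ℝ) : L0 β τ s
    = 2*s*(∫ u in Set.Ioi (1:ℝ), τ * u / (u ^ β + τ))
      + 2*(1-s)*(∫ u in Set.Ioi (0:ℝ), τ * u / (u ^ β + τ)) := rfl

lemma Li_eq (β τ : ℝ) (i : ℕ) (s : ℝ) : Li β τ i s
    = 2*s*(∫ u in Set.Ioi (1:ℝ), τ ^ i * u ^ (β + 1) / (u ^ β + τ) ^ (i + 1))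
      + 2*(1-s)*(∫ u in Set.Ioi (0:ℝ), τ ^ i * u ^ (β + 1) / (u ^ β + τ) ^ (i + 1)) := rfl

lemma H_nonneg {β τ : ℝ} (hτ : 0 < τ) (u : ℝ) (hu : 0 < u) : 0 ≤ τ * u / (u ^ β + τ) := by
  have := den_pos (β := β) hτ u hu
  positivity

lemma g_nonneg {β τ : ℝ} (hτ : 0 < τ) (i : ℕ) (u : ℝ) (hu : 0 < u) :
    0 ≤ τ ^ i * u ^ (β + 1) / (u ^ β + τ) ^ (i + 1) := by
  have h1 := den_pos (β := β) hτ u hu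
  have h2 : 0 ≤ u ^ (β + 1) := Real.rpow_nonneg hu.le _
  positivity

/-- expansion of a sum of scaled `Li`s -/
lemma sum_c_Li (β τ c s : ℝ) (m : ℕ) :
    ∑ i ∈ Finset.range m, c * Li β τ (i+1) s
    = c * (2*s*(∑ i ∈ Finset.range m, ∫ u in Set.Ioi (1:ℝ), τ^(i+1) * u^(β+1) / (u^β+τ)^(i+1+1))
        + 2*(1-s)*(∑ i ∈ Finset.range m, ∫ u in Set.Ioi (0:ℝ), τ^(i+1) * u^(β+1) / (u^β+τ)^(i+1+1))) := by
  have h1 : ∀ i ∈ Finset.range m, c * Li β τ (i+1) s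
      = (c*(2*s)) * (∫ u in Set.Ioi (1:ℝ), τ^(i+1) * u^(β+1) / (u^β+τ)^(i+1+1))
        + (c*(2*(1-s))) * (∫ u in Set.Ioi (0:ℝ), τ^(i+1) * u^(β+1) / (u^β+τ)^(i+1+1)) := by
    intro i _
    rw [Li_eq]
    ring
  rw [Finset.sum_congr rfl h1, Finset.sum_add_distrib, ← Finset.mul_sum, ← Finset.mul_sum]
  ring

lemma sumA_le_A {β τ : ℝ} (hβ : 2 < β) (hτ : 0 < τ) (m : ℕ) :
    ∑ i ∈ Finset.range m, ∫ u in Set.Ioi (1:ℝ), τ^(i+1) * u^(β+1) / (u^β+τ)^(i+1+1)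
    ≤ ∫ u in Set.Ioi (1:ℝ), τ * u / (u ^ β + τ) := by
  rw [sum_int_g hβ hτ m (Ioi_subset_Ioi zero_le_one) measurableSet_Ioi]
  apply setIntegral_mono_on ((integrable_Hphi hβ hτ m).mono_set (Ioi_subset_Ioi zero_le_one))
    ((integrable_H hβ hτ).mono_set (Ioi_subset_Ioi zero_le_one)) measurableSet_Ioi
  intro u hu
  have hu0 : 0 < u := lt_trans one_pos hu
  have hd := den_pos (β := β) hτ u hu0
  have hb : 0 < u ^ β := Real.rpow_pos_of_pos hu0 β
  have hr0 : 0 ≤ τ/(u^β+τ) := by positivity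
  have hr1 : τ/(u^β+τ) ≤ 1 := by rw [div_le_one hd]; linarith
  have h1 : (τ/(u^β+τ))^m ≤ 1 := pow_le_one₀ hr0 hr1
  have h2 : 0 ≤ (τ/(u^β+τ))^m := by positivity
  nlinarith [H_nonneg (β := β) hτ u hu0]

lemma star' {β τ : ℝ} (hβ : 2 < β) (hτ : 0 < τ) (m : ℕ) :
    (∑ i ∈ Finset.range m, ∫ u in Set.Ioi (0:ℝ), τ^(i+1) * u^(β+1) / (u^β+τ)^(i+1+1))
      + 2 * ((∑ i ∈ Finset.range m, ∫ u in Set.Ioi (0:ℝ), τ^(i+1) * u^(β+1) / (u^β+τ)^(i+1+1))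
          * (∫ u in Set.Ioi (1:ℝ), τ*u/(u^β+τ)))
    ≤ (∫ u in Set.Ioi (0:ℝ), τ*u/(u^β+τ))
      + 2 * ((∫ u in Set.Ioi (0:ℝ), τ*u/(u^β+τ))
          * (∑ i ∈ Finset.range m, ∫ u in Set.Ioi (1:ℝ), τ^(i+1) * u^(β+1) / (u^β+τ)^(i+1+1))) := by
  have h := star hβ hτ m
  rw [← sum_int_g hβ hτ m subset_rfl measurableSet_Ioi,
    ← sum_int_g hβ hτ m (Ioi_subset_Ioi zero_le_one) measurableSet_Ioi] at h
  exact h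

/-- `P_c` as a stopping probability. -/
lemma Pc_eq_Pfun (β τ : ℝ) (N : ℕ) (hN : 1 ≤ N) (t : ℝ)
    (h : ∀ i, 0 ≤ 1 / (t + L0 β τ t) * Li β τ i t) :
    Pc β τ N t = Pfun (t / (t + L0 β τ t)) (fun i => 1 / (t + L0 β τ t) * Li β τ i t) (N-1) := by
  rw [Pc, inv_eq_Tmat N (1 / (t + L0 β τ t)) (fun i => Li β τ i t) (Dmat β τ N t) (fun j k => rfl),
    matNorm1_Tmat N hN _ h, Pfun_eq_mul_Efun]

/-- **Property 3 of the paper's Lemma 3**: for every `t ∈ [0,1]`, `0 ≤ P_c(t) ≤ P_b` where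
`P_b = P_c(1)` is the STP of a backhaul file; moreover `P_c(0) = 0`. -/
theorem Pc_nonneg_le_Pb (β τ : ℝ) (hβ : 2 < β) (hτ : 0 < τ) (N : ℕ) (hN : 1 ≤ N) :
    (∀ t ∈ Set.Icc (0 : ℝ) 1, 0 ≤ Pc β τ N t ∧ Pc β τ N t ≤ Pc β τ N 1) ∧
    Pc β τ N 0 = 0 := by
    -- nonnegativity of the four basic integrals
  have hIA0 : 0 ≤ ∫ u in Set.Ioi (1:ℝ), τ * u / (u ^ β + τ) :=
    setIntegral_nonneg measurableSet_Ioi fun u hu => H_nonneg hτ u (lt_trans one_pos hu)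
  have hIB0 : 0 ≤ ∫ u in Set.Ioi (0:ℝ), τ * u / (u ^ β + τ) :=
    setIntegral_nonneg measurableSet_Ioi fun u hu => H_nonneg hτ u hu
  have hgA0 : ∀ i : ℕ, 0 ≤ ∫ u in Set.Ioi (1:ℝ), τ ^ i * u ^ (β+1) / (u ^ β + τ) ^ (i+1) :=
    fun i => setIntegral_nonneg measurableSet_Ioi fun u hu => g_nonneg hτ i u (lt_trans one_pos hu)
  have hgB0 : ∀ i : ℕ, 0 ≤ ∫ u in Set.Ioi (0:ℝ), τ ^ i * u ^ (β+1) / (u ^ β + τ) ^ (i+1) :=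
    fun i => setIntegral_nonneg measurableSet_Ioi fun u hu => g_nonneg hτ i u hu
  have hLi0 : ∀ s : ℝ, 0 ≤ s → s ≤ 1 → ∀ i : ℕ, 0 ≤ Li β τ i s := by
    intro s h0 h1 i
    rw [Li_eq]
    have := hgA0 i
    have := hgB0 i
    nlinarith
  have hS0 : ∀ s : ℝ, 0 ≤ s → s ≤ 1 → 0 ≤ s + L0 β τ s := by
    intro s h0 h1
    rw [L0_eq]
    nlinarith
  have hy0 : ∀ s : ℝ, 0 ≤ s → s ≤ 1 → ∀ i : ℕ, 0 ≤ 1 / (s + L0 β τ s) * Li β τ i s := by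
    intro s h0 h1 i
    exact mul_nonneg (one_div_nonneg.mpr (hS0 s h0 h1)) (hLi0 s h0 h1 i)
  constructor
  · intro t ht
    have hPct := Pc_eq_Pfun β τ N hN t (hy0 t ht.1 ht.2)
    have hPc1 := Pc_eq_Pfun β τ N hN 1 (hy0 1 zero_le_one le_rfl)
    constructor
    · rw [hPct]
      exact Pfun_nonneg _ _ (div_nonneg ht.1 (hS0 t ht.1 ht.2)) (hy0 t ht.1 ht.2) _
    · rw [hPct, hPc1]
      apply Pfun_le_Pfun _ _ _ _ (div_nonneg ht.1 (hS0 t ht.1 ht.2)) (hy0 t ht.1 ht.2)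
        (hy0 1 zero_le_one le_rfl)
      · -- domination
        intro m
        rw [sum_c_Li, sum_c_Li, L0_eq β τ t, L0_eq β τ 1]
        have hPA0 : 0 ≤ ∑ i ∈ Finset.range m, ∫ u in Set.Ioi (1:ℝ),
            τ^(i+1) * u^(β+1) / (u^β+τ)^(i+1+1) :=
          Finset.sum_nonneg fun i _ => hgA0 (i+1)
        have hPB0 : 0 ≤ ∑ i ∈ Finset.range m, ∫ u in Set.Ioi (0:ℝ),
            τ^(i+1) * u^(β+1) / (u^β+τ)^(i+1+1) :=
          Finset.sum_nonneg fun i _ => hgB0 (i+1)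
        exact dom_algebra t _ _ _ _ ht.1 ht.2 hIA0 hIB0 hPA0 hPB0 (star' hβ hτ m)
      · -- substochasticity at t = 1
        intro m
        rw [sum_c_Li, L0_eq β τ 1]
        have hPB0 : 0 ≤ ∑ i ∈ Finset.range m, ∫ u in Set.Ioi (0:ℝ),
            τ^(i+1) * u^(β+1) / (u^β+τ)^(i+1+1) :=
          Finset.sum_nonneg fun i _ => hgB0 (i+1)
        exact sub_algebra _ _ _ _ hIA0 hPB0 (sumA_le_A hβ hτ m)
  · rw [Pc]
    simp
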